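/- Let h ∈ ℂ[s,t] be a nonzero squarefree polynomial, let f̌ and ǧ be polynomials in ℂ[s,t,e], and let l, m be positive integers. Set f = −3h² + e^l·f̌ and g = 2h³ + e^m·ǧ, and let Δ = 4f³ + 27g². Assume Δ ≠ 0, and let n be the largest integer such that eⁿ divides Δ (one has n ≥ 1). Then h² divides the polynomial in ℂ[s,t] obtained from Δ/eⁿ by setting e = 0. -/

import Mathlib

set_option maxHeartbeats 1000000
set_option synthInstance.maxHeartbeats 200000

noncomputable section

open Polynomial

abbrev R2 : Type := MvPolynomial (Fin 2) ℂ
abbrev KK : Type := FractionRing R2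

def φ : R2 →+* KK := algebraMap R2 KK

lemma φ_inj : Function.Injective φ := IsFractionRing.injective R2 KK

/-- `Vl p k x` means `v_p(x) ≥ k` for `x` in the fraction field. -/
def Vl (p : R2) (k : ℕ) (x : KK) : Prop :=
  ∃ r d : R2, ¬ p ∣ d ∧ φ d * x = φ (p ^ k * r)

namespace Vl

lemma of_elem {p : R2} (hp : Prime p) (r : R2) : Vl p 0 (φ r) :=
  ⟨r, 1, fun hd => hp.not_unit (isUnit_of_dvd_one hd), by simp⟩

lemma zero {p : R2} (hp : Prime p) (k : ℕ) : Vl p k 0 :=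
  ⟨0, 1, fun hd => hp.not_unit (isUnit_of_dvd_one hd), by simp⟩

lemma add {p : R2} (hp : Prime p) {k : ℕ} {x y : KK} (hx : Vl p k x) (hy : Vl p k y) :
    Vl p k (x + y) := by
  obtain ⟨r, d, hd, hE⟩ := hx
  obtain ⟨r', d', hd', hE'⟩ := hy
  refine ⟨d' * r + d * r', d * d', fun hdd => (hp.dvd_mul.mp hdd).elim hd hd', ?_⟩
  have h1 : φ (d * d') * (x + y) = φ d' * (φ d * x) + φ d * (φ d' * y) := by
    simp only [map_mul]; ring
  rw [h1, hE, hE']; simp only [map_mul, map_add]; ring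

lemma mul {p : R2} (hp : Prime p) {k l : ℕ} {x y : KK} (hx : Vl p k x) (hy : Vl p l y) :
    Vl p (k + l) (x * y) := by
  obtain ⟨r, d, hd, hE⟩ := hx
  obtain ⟨r', d', hd', hE'⟩ := hy
  refine ⟨r * r', d * d', fun hdd => (hp.dvd_mul.mp hdd).elim hd hd', ?_⟩
  have h1 : φ (d * d') * (x * y) = (φ d * x) * (φ d' * y) := by simp only [map_mul]; ring
  rw [h1, hE, hE']; simp only [map_mul, map_pow, pow_add]; ring

lemma mono {p : R2} {k l : ℕ} (hkl : k ≤ l) {x : KK} (hx : Vl p l x) : Vl p k x := by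
  obtain ⟨r, d, hd, hE⟩ := hx
  exact ⟨p ^ (l - k) * r, d, hd, by rw [hE]; congr 1; rw [← mul_assoc, ← pow_add,
    Nat.add_sub_cancel' hkl]⟩

lemma neg {p : R2} {k : ℕ} {x : KK} (hx : Vl p k x) : Vl p k (-x) := by
  obtain ⟨r, d, hd, hE⟩ := hx
  refine ⟨-r, d, hd, ?_⟩
  rw [mul_neg (p^k) r, map_neg, ← hE]
  ring

lemma sub {p : R2} (hp : Prime p) {k : ℕ} {x y : KK} (hx : Vl p k x) (hy : Vl p k y) :
    Vl p k (x - y) := by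
  simpa [sub_eq_add_neg] using add hp hx hy.neg

lemma sum {p : R2} (hp : Prime p) {k : ℕ} {s : Finset (ℕ × ℕ)} {f : ℕ × ℕ → KK}
    (hf : ∀ i ∈ s, Vl p k (f i)) : Vl p k (∑ i ∈ s, f i) := by
  classical
  induction s using Finset.induction_on with
  | empty => simpa using Vl.zero hp k
  | insert _ _ hni ih =>
      rename_i a s'
      rw [Finset.sum_insert hni]
      exact add hp (hf a (Finset.mem_insert_self a s'))
        (ih fun i hi => hf i (Finset.mem_insert_of_mem hi))

/-- Extraction: an element of `R2` with `v_p ≥ k` is divisible by `p^k`. -/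
lemma extract {p : R2} (hp : Prime p) {k : ℕ} {r : R2} (hx : Vl p k (φ r)) : p ^ k ∣ r := by
  obtain ⟨r', d, hd, hE⟩ := hx
  have h1 : d * r = p ^ k * r' := φ_inj (by simp only [map_mul, map_pow] at hE ⊢; exact hE)
  exact hp.pow_dvd_of_dvd_mul_left k hd ⟨r', by rw [mul_comm] at h1; rw [← h1]; ring⟩

/-- Square rounding: if `u` is integral and `u² ∈ (p)`, then `u ∈ (p)`. -/
lemma sq_round {p : R2} (hp : Prime p) {u : KK} (h0 : Vl p 0 u) (h1 : Vl p 1 (u * u)) :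
    Vl p 1 u := by
  obtain ⟨r, d, hd, hE⟩ := h0
  obtain ⟨r', d', hd', hE'⟩ := h1
  have hru : φ d * u = φ r := by simpa using hE
  have key : d' * (r * r) = d * d * (p ^ 1 * r') := by
    apply φ_inj
    simp only [map_mul, map_pow]
    calc φ d' * (φ r * φ r) = φ d' * ((φ d * u) * (φ d * u)) := by rw [hru]
    _ = (φ d * φ d) * (φ d' * (u * u)) := by ring
    _ = (φ d * φ d) * φ (p ^ 1 * r') := by rw [hE']
    _ = _ := by simp only [map_mul, map_pow]
  have hpr : p ∣ r := by
    have h2 : p ∣ d' * (r * r) := ⟨d * d * r', by rw [key]; ring⟩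
    rcases hp.dvd_mul.mp h2 with h | h
    · exact absurd h hd'
    · rcases hp.dvd_mul.mp h with h | h <;> exact h
  obtain ⟨r0, hr0⟩ := hpr
  exact ⟨r0, d, hd, by rw [hru, hr0]; simp only [map_mul, pow_one]⟩

/-- Division by `p` times a unit-mod-p denominator. -/
lemma div_p_unit {p : R2} (hp : Prime p) {x : KK} {e : R2} (he : ¬ p ∣ e) (hx : Vl p 1 x)
    {c : KK} (hc : φ (p * e) * c = x) : Vl p 0 c := by
  obtain ⟨r, d, hd, hE⟩ := hx
  refine ⟨r, e * d, fun hdd => (hp.dvd_mul.mp hdd).elim he hd, ?_⟩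
  have hp0 : φ p ≠ 0 := fun h => hp.ne_zero (φ_inj (by rw [h, map_zero]))
  apply mul_left_cancel₀ hp0
  calc φ p * (φ (e * d) * c) = φ d * (φ (p * e) * c) := by simp only [map_mul]; ring
  _ = φ d * x := by rw [hc]
  _ = φ (p ^ 1 * r) := hE
  _ = φ p * φ (p ^ 0 * r) := by simp only [map_mul, pow_one, pow_zero, one_mul]

/-- Division by a denominator that is a unit mod p. -/
lemma div_unit {p : R2} (hp : Prime p) {x : KK} {e : R2} (he : ¬ p ∣ e) {k : ℕ}
    (hx : Vl p k x) {c : KK} (hc : φ e * c = x) : Vl p k c := by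
  obtain ⟨r, d, hd, hE⟩ := hx
  refine ⟨r, e * d, fun hdd => (hp.dvd_mul.mp hdd).elim he hd, ?_⟩
  calc φ (e * d) * c = φ d * (φ e * c) := by simp only [map_mul]; ring
  _ = φ d * x := by rw [hc]
  _ = φ (p ^ k * r) := hE

end Vl

/-- All coefficients have `v_p ≥ 0`. -/
def IP (p : R2) (P : Polynomial KK) : Prop := ∀ i, Vl p 0 (P.coeff i)

namespace IP

variable {p : R2}

lemma add (hp : Prime p) {P Q : Polynomial KK} (hP : IP p P) (hQ : IP p Q) : IP p (P + Q) :=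
  fun i => by rw [Polynomial.coeff_add]; exact Vl.add hp (hP i) (hQ i)

lemma neg {P : Polynomial KK} (hP : IP p P) : IP p (-P) :=
  fun i => by rw [Polynomial.coeff_neg]; exact Vl.neg (hP i)

lemma sub (hp : Prime p) {P Q : Polynomial KK} (hP : IP p P) (hQ : IP p Q) : IP p (P - Q) :=
  fun i => by rw [Polynomial.coeff_sub]; exact Vl.sub hp (hP i) (hQ i)

lemma mul (hp : Prime p) {P Q : Polynomial KK} (hP : IP p P) (hQ : IP p Q) : IP p (P * Q) := by
  intro i
  rw [Polynomial.coeff_mul]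
  exact Vl.sum hp fun x _ => by
    have := Vl.mul hp (hP x.1) (hQ x.2); simpa using this

lemma pow (hp : Prime p) {P : Polynomial KK} (hP : IP p P) (k : ℕ) : IP p (P ^ k) := by
  induction k with
  | zero =>
      intro i
      simp only [pow_zero, Polynomial.coeff_one]
      split
      · simpa using Vl.of_elem hp 1
      · exact Vl.zero hp 0
  | succ k ih => rw [pow_succ]; exact mul hp ih hP

lemma Cφ (hp : Prime p) (a : R2) : IP p (Polynomial.C (φ a)) := fun i => by
  rw [Polynomial.coeff_C]
  split
  · exact Vl.of_elem hp a
  · exact Vl.zero hp 0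

lemma Xp (hp : Prime p) : IP p (Polynomial.X : Polynomial KK) := fun i => by
  rw [Polynomial.coeff_X]
  split
  · simpa using Vl.of_elem hp 1
  · exact Vl.zero hp 0

lemma map (hp : Prime p) (P : Polynomial R2) : IP p (P.map φ) := fun i => by
  rw [Polynomial.coeff_map]; exact Vl.of_elem hp _

lemma shift (hp : Prime p) {P E : Polynomial KK} {K : ℕ} (hPE : P = Polynomial.X ^ K * E)
    (hP : IP p P) : IP p E := fun i => by
  have h1 : E.coeff i = P.coeff (i + K) := by rw [hPE, Polynomial.coeff_X_pow_mul]
  rw [h1]; exact hP _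

end IP

/-- Split off a power of `X` from `P² - Q²` when `X ∤ (P+Q)`. -/
lemma punch {P Q G : Polynomial KK} {K : ℕ} (hPQ : P ^ 2 - Q ^ 2 = Polynomial.X ^ K * G)
    (h0 : (P + Q).coeff 0 ≠ 0) :
    ∃ E : Polynomial KK, P - Q = Polynomial.X ^ K * E ∧ E * (P + Q) = G := by
  have hfac : (P + Q) * (P - Q) = Polynomial.X ^ K * G := by rw [← hPQ]; ring
  have hXnd : ¬ (Polynomial.X : Polynomial KK) ∣ (P + Q) := fun hd =>
    h0 (Polynomial.X_dvd_iff.mp hd)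
  have h2 : (Polynomial.X : Polynomial KK) ^ K ∣ (P - Q) :=
    Polynomial.prime_X.pow_dvd_of_dvd_mul_left K hXnd ⟨G, hfac⟩
  obtain ⟨E, hE⟩ := h2
  refine ⟨E, hE, ?_⟩
  apply mul_left_cancel₀ (pow_ne_zero K (Polynomial.X_ne_zero : (Polynomial.X : Polynomial KK) ≠ 0))
  calc (Polynomial.X:Polynomial KK) ^ K * (E * (P + Q)) = (P + Q) * (Polynomial.X ^ K * E) := by ring
  _ = (P + Q) * (P - Q) := by rw [← hE]
  _ = Polynomial.X ^ K * G := hfac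

namespace Vl

lemma of_dvd {p : R2} (hp : Prime p) {k : ℕ} {r : R2} (h : p ^ k ∣ r) : Vl p k (φ r) := by
  obtain ⟨r0, hr0⟩ := h
  exact ⟨r0, 1, fun hd => hp.not_unit (isUnit_of_dvd_one hd), by rw [hr0]; simp⟩

end Vl

namespace IP

lemma Cc {p : R2} (hp : Prime p) {c : KK} (hc : Vl p 0 c) : IP p (Polynomial.C c) := fun i => by
  rw [Polynomial.coeff_C]
  split
  · exact hc
  · exact Vl.zero hp 0

end IP

lemma coeff0_pow {Rc : Type*} [CommSemiring Rc] (P : Polynomial Rc) (k : ℕ) :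
    (P ^ k).coeff 0 = (P.coeff 0) ^ k := by
  induction k with
  | zero => simp
  | succ k ih => rw [pow_succ, pow_succ, Polynomial.mul_coeff_zero, ih]

lemma coeff0_Xpow_mul {Rc : Type*} [CommSemiring Rc] {S : Polynomial Rc} {m : ℕ} (hm : 1 ≤ m) :
    (Polynomial.X ^ m * S).coeff 0 = 0 := by
  have h1 : (Polynomial.X : Polynomial Rc) ∣ Polynomial.X ^ m * S :=
    dvd_mul_of_dvd_left (dvd_pow_self _ (by omega)) _
  exact Polynomial.X_dvd_iff.mp h1

lemma key {H p pt : R2} (hp : Prime p) (hH : H = p * pt) (hpt : ¬ p ∣ pt) (hH0 : H ≠ 0)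
    (A B D : Polynomial R2) (hA0 : A.coeff 0 = H ^ 2) (hB0 : B.coeff 0 = H ^ 3)
    (n : ℕ) (hn : 1 ≤ n) (hfac : A ^ 3 - B ^ 2 = Polynomial.X ^ n * D) :
    p ^ 2 ∣ D.coeff 0 := by
  have hu2 : IsUnit (2 : R2) := by
    apply IsUnit.of_mul_eq_one (MvPolynomial.C ((2:ℂ)⁻¹))
    rw [show (2 : R2) = MvPolynomial.C (2:ℂ) from (map_ofNat MvPolynomial.C 2).symm, ← map_mul]
    norm_num
  have hu3 : IsUnit (3 : R2) := by
    apply IsUnit.of_mul_eq_one (MvPolynomial.C ((3:ℂ)⁻¹))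
    rw [show (3 : R2) = MvPolynomial.C (3:ℂ) from (map_ofNat MvPolynomial.C 3).symm, ← map_mul]
    norm_num
  have hu4 : IsUnit (4 : R2) := by
    apply IsUnit.of_mul_eq_one (MvPolynomial.C ((4:ℂ)⁻¹))
    rw [show (4 : R2) = MvPolynomial.C (4:ℂ) from (map_ofNat MvPolynomial.C 4).symm, ← map_mul]
    norm_num
  have hnd2 : ¬ p ∣ (2 : R2) := fun hd => hp.not_unit (isUnit_of_dvd_unit hd hu2)
  have hnd3 : ¬ p ∣ (3 : R2) := fun hd => hp.not_unit (isUnit_of_dvd_unit hd hu3)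
  have hnd4 : ¬ p ∣ (4 : R2) := fun hd => hp.not_unit (isUnit_of_dvd_unit hd hu4)
  have hnd2pt : ¬ p ∣ (2 * pt : R2) := fun hd => (hp.dvd_mul.mp hd).elim hnd2 hpt
  have e2 : (2 : KK) = φ (2 : R2) := (map_ofNat φ 2).symm
  have e3 : (3 : KK) = φ (3 : R2) := (map_ofNat φ 3).symm
  have e4 : (4 : KK) = φ (4 : R2) := (map_ofNat φ 4).symm
  set hk : KK := φ H with hhk
  have hk0 : hk ≠ 0 := fun h => hH0 (φ_inj (by rw [hhk] at h; rw [h, map_zero]))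
  set Am := A.map φ with hAmdef
  set Bm := B.map φ with hBmdef
  set Dm := D.map φ with hDmdef
  have hfm : Am ^ 3 - Bm ^ 2 = Polynomial.X ^ n * Dm := by
    have h1 := congrArg (Polynomial.map φ) hfac
    simpa [Polynomial.map_pow, Polynomial.map_mul, Polynomial.map_sub] using h1
  have hAm0 : Am.coeff 0 = hk ^ 2 := by
    rw [hAmdef, Polynomial.coeff_map, hA0, map_pow, hhk]
  have hBm0 : Bm.coeff 0 = hk ^ 3 := by
    rw [hBmdef, Polynomial.coeff_map, hB0, map_pow, hhk]
  have ip2 : IP p (2 : Polynomial KK) := by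
    rw [show (2 : Polynomial KK) = Polynomial.C (φ (2:R2)) from by
      rw [← e2]; exact (map_ofNat (Polynomial.C : KK →+* Polynomial KK) 2).symm]
    exact IP.Cφ hp _
  have ip3 : IP p (3 : Polynomial KK) := by
    rw [show (3 : Polynomial KK) = Polynomial.C (φ (3:R2)) from by
      rw [← e3]; exact (map_ofNat (Polynomial.C : KK →+* Polynomial KK) 3).symm]
    exact IP.Cφ hp _
  have ip4 : IP p (4 : Polynomial KK) := by
    rw [show (4 : Polynomial KK) = Polynomial.C (φ (4:R2)) from by
      rw [← e4]; exact (map_ofNat (Polynomial.C : KK →+* Polynomial KK) 4).symm]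
    exact IP.Cφ hp _
  have hco2 : ((2 : Polynomial KK)).coeff 0 = 2 := by norm_num
  have hco3 : ((3 : Polynomial KK)).coeff 0 = 3 := by norm_num
  have hco4 : ((4 : Polynomial KK)).coeff 0 = 4 := by norm_num
  have h4v : Vl p 0 (4:KK) := by rw [e4]; exact Vl.of_elem hp _
  have h3v : Vl p 0 (3:KK) := by rw [e3]; exact Vl.of_elem hp _
  have h4k : (4 : KK) * hk ^ 3 ≠ 0 := by
    apply mul_ne_zero _ (pow_ne_zero _ hk0)
    rw [e4]
    exact fun h => (by norm_num : (4:R2) ≠ 0) (φ_inj (by rw [h, map_zero]))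
  -- the inductive construction of integral square-root prefixes
  have build : ∀ m : ℕ, 1 ≤ m → 2*m ≤ n + 1 → ∃ T S : Polynomial KK,
      IP p T ∧ T.coeff 0 = hk ∧ Am - T^2 = Polynomial.X ^ m * S := by
    intro m
    induction m with
    | zero => omega
    | succ m ih =>
      intro _ hbound
      by_cases hm : m = 0
      · -- base case : m+1 = 1
        subst hm
        have hdvd : (Polynomial.X : Polynomial KK) ∣ (Am - (Polynomial.C hk)^2) := by
          rw [Polynomial.X_dvd_iff, Polynomial.coeff_sub, hAm0, coeff0_pow,
            Polynomial.coeff_C_zero, sub_self]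
        obtain ⟨S, hS⟩ := hdvd
        exact ⟨Polynomial.C hk, S, IP.Cc hp (by rw [hhk]; exact Vl.of_elem hp H),
          Polynomial.coeff_C_zero, by rw [pow_one]; exact hS⟩
      · have hm1 : 1 ≤ m := by omega
        obtain ⟨T, S, hTIP, hT0, hTS⟩ := ih hm1 (by omega)
        obtain ⟨kk, hnk⟩ : ∃ kk, n = 2*m + kk := ⟨n - 2*m, by omega⟩
        have hkk1 : 1 ≤ kk := by omega
        have hAmT : Am = T^2 + Polynomial.X ^ m * S := by rw [← hTS]; ring
        have hSip : IP p S :=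
          IP.shift hp hTS (IP.sub hp (IP.map hp A) (IP.pow hp hTIP 2))
        set Y : Polynomial KK := 2*T^3 + 3*(T*(Polynomial.X ^ m * S)) with hYdef
        have hYIP : IP p Y := by
          apply IP.add hp (IP.mul hp ip2 (IP.pow hp hTIP 3))
          exact IP.mul hp ip3 (IP.mul hp hTIP (IP.mul hp (IP.pow hp (IP.Xp hp) m) hSip))
        set G : Polynomial KK :=
          4*(Polynomial.X ^ kk * Dm) - 3*(T^2*S^2) - 4*(Polynomial.X ^ m * S^3) with hGdef
        have hid : Y^2 - (2*Bm)^2 = Polynomial.X ^ (2*m) * G := by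
          have hXn : (Polynomial.X : Polynomial KK)^n = Polynomial.X ^(2*m) * Polynomial.X ^kk := by
            rw [hnk, pow_add]
          calc Y^2 - (2*Bm)^2
              = 4*(Am^3 - Bm^2) - 3*(T^2*((Polynomial.X ^ m * S)^2))
                - 4*((Polynomial.X ^ m * S)^3) := by rw [hAmT, hYdef]; ring
            _ = 4*((Polynomial.X ^(2*m) * Polynomial.X ^kk)*Dm)
                - 3*(T^2*((Polynomial.X ^ m * S)^2)) - 4*((Polynomial.X ^ m * S)^3) := by
                rw [hfm, hXn]
            _ = Polynomial.X ^ (2*m) * G := by rw [hGdef]; ring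
        have hXmS0 : (Polynomial.X ^ m * S).coeff 0 = 0 := coeff0_Xpow_mul hm1
        have hsum0 : (Y + 2*Bm).coeff 0 = 4 * hk^3 := by
          rw [Polynomial.coeff_add, hYdef, Polynomial.coeff_add, Polynomial.mul_coeff_zero,
            Polynomial.mul_coeff_zero, Polynomial.mul_coeff_zero, coeff0_pow, hXmS0,
            Polynomial.mul_coeff_zero, hco2, hco3, hT0, hBm0]
          ring
        have hsum0' : (Y + 2*Bm).coeff 0 ≠ 0 := by rw [hsum0]; exact h4k
        obtain ⟨E, hE, hEG⟩ := punch hid hsum0'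
        have hEIP : IP p E := IP.shift hp hE
          (IP.sub hp hYIP (IP.mul hp ip2 (IP.map hp B)))
        have hG0 : G.coeff 0 = -(3*(hk^2*(S.coeff 0)^2)) := by
          have hx1 : ((4:Polynomial KK)*(Polynomial.X ^ kk * Dm)).coeff 0 = 0 := by
            rw [Polynomial.mul_coeff_zero, coeff0_Xpow_mul hkk1, mul_zero]
          have hx2 : ((4:Polynomial KK)*(Polynomial.X ^ m * S^3)).coeff 0 = 0 := by
            rw [Polynomial.mul_coeff_zero, coeff0_Xpow_mul hm1, mul_zero]
          have hx3 : ((3:Polynomial KK)*(T^2*S^2)).coeff 0 = 3*(hk^2*(S.coeff 0)^2) := by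
            rw [Polynomial.mul_coeff_zero, Polynomial.mul_coeff_zero, coeff0_pow, coeff0_pow,
              hco3, hT0]
          rw [hGdef, Polynomial.coeff_sub, Polynomial.coeff_sub, hx1, hx2, hx3]
          ring
        have hE0 : E.coeff 0 * (4*hk^3) = -(3*(hk^2*(S.coeff 0)^2)) := by
          have h1 := congrArg (fun P => Polynomial.coeff P 0) hEG
          simpa [Polynomial.mul_coeff_zero, hsum0, hG0] using h1
        have hc4 : (4:KK)*hk*(E.coeff 0) = -(3*(S.coeff 0)^2) := by
          apply mul_left_cancel₀ (pow_ne_zero 2 hk0)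
          calc hk^2 * ((4:KK)*hk*(E.coeff 0)) = E.coeff 0 * (4*hk^3) := by ring
          _ = -(3*(hk^2*(S.coeff 0)^2)) := hE0
          _ = hk^2 * (-(3*(S.coeff 0)^2)) := by ring
        -- rounding
        have hVl1sq : Vl p 1 (S.coeff 0 * S.coeff 0) := by
          apply Vl.div_unit hp hnd3 (x := φ (p*(4*pt)) * (-(E.coeff 0)))
          · have h1 : Vl p 1 (φ (p*(4*pt))) := Vl.of_dvd hp ⟨4*pt, by rw [pow_one]⟩
            simpa using Vl.mul hp h1 (Vl.neg (hEIP 0))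
          · have hpe : φ (p*(4*pt)) = 4*hk := by
              rw [show p*(4*pt) = 4*H from by rw [hH]; ring, map_mul, ← e4, hhk]
            rw [hpe]
            calc φ (3:R2) * (S.coeff 0 * S.coeff 0) = 3*(S.coeff 0)^2 := by rw [← e3]; ring
            _ = 4*hk*(-(E.coeff 0)) := by linear_combination hc4
        have hVl1S0 : Vl p 1 (S.coeff 0) := Vl.sq_round hp (hSip 0) hVl1sq
        have h2hk : (2:KK)*hk ≠ 0 := by
          apply mul_ne_zero _ hk0
          rw [e2]
          exact fun h => (by norm_num : (2:R2) ≠ 0) (φ_inj (by rw [h, map_zero]))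
        set c : KK := S.coeff 0 / (2*hk) with hcdef
        have hceq : φ (p*(2*pt)) * c = S.coeff 0 := by
          have hpe : φ (p*(2*pt)) = 2*hk := by
            rw [show p*(2*pt) = 2*H from by rw [hH]; ring, map_mul, ← e2, hhk]
          rw [hpe, hcdef, mul_div_cancel₀ _ h2hk]
        have hcIP : Vl p 0 c := Vl.div_p_unit hp hnd2pt hVl1S0 hceq
        set T' : Polynomial KK := T + Polynomial.C c * Polynomial.X ^ m with hT'def
        have hT'IP : IP p T' :=
          IP.add hp hTIP (IP.mul hp (IP.Cc hp hcIP) (IP.pow hp (IP.Xp hp) m))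
        have hcX0 : (Polynomial.C c * Polynomial.X ^ m).coeff 0 = 0 := by
          rw [Polynomial.mul_coeff_zero, Polynomial.coeff_C_zero, Polynomial.coeff_X_pow,
            if_neg (show ¬ (0:ℕ) = m from fun h => hm h.symm), mul_zero]
        have hT'0 : T'.coeff 0 = hk := by
          rw [hT'def, Polynomial.coeff_add, hT0, hcX0, add_zero]
        set S2 : Polynomial KK :=
          S - 2*(Polynomial.C c)*T - (Polynomial.C c)^2*(Polynomial.X ^ m) with hS2def
        have hfac2 : Am - T'^2 = Polynomial.X ^ m * S2 := by
          rw [hAmT, hT'def, hS2def]; ring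
        have hS20 : S2.coeff 0 = 0 := by
          have hS0c : S.coeff 0 = 2*hk*c := by
            rw [← hceq, show φ (p*(2*pt)) = 2*hk from by
              rw [show p*(2*pt) = 2*H from by rw [hH]; ring, map_mul, ← e2, hhk]]
          rw [hS2def, Polynomial.coeff_sub, Polynomial.coeff_sub, Polynomial.mul_coeff_zero,
            Polynomial.mul_coeff_zero, Polynomial.mul_coeff_zero, coeff0_pow,
            Polynomial.coeff_C_zero, Polynomial.coeff_X_pow, hco2, hT0, hS0c,
            if_neg (show ¬ (0:ℕ) = m from fun h => hm h.symm)]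
          ring
        obtain ⟨S3, hS3⟩ := Polynomial.X_dvd_iff.mpr hS20
        refine ⟨T', S3, hT'IP, hT'0, ?_⟩
        rw [hfac2, hS3, pow_succ]
        ring
  -- endgame
  rcases Nat.even_or_odd n with ⟨j, hj⟩ | ⟨j, hj⟩
  · -- n = j + j
    have hj1 : 1 ≤ j := by omega
    obtain ⟨T, S, hTIP, hT0, hTS⟩ := build j hj1 (by omega)
    have hAmT : Am = T^2 + Polynomial.X ^ j * S := by rw [← hTS]; ring
    have hSip : IP p S :=
      IP.shift hp hTS (IP.sub hp (IP.map hp A) (IP.pow hp hTIP 2))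
    set Y : Polynomial KK := 2*T^3 + 3*(T*(Polynomial.X ^ j * S)) with hYdef
    have hYIP : IP p Y := by
      apply IP.add hp (IP.mul hp ip2 (IP.pow hp hTIP 3))
      exact IP.mul hp ip3 (IP.mul hp hTIP (IP.mul hp (IP.pow hp (IP.Xp hp) j) hSip))
    set G : Polynomial KK := 4*Dm - 3*(T^2*S^2) - 4*(Polynomial.X ^ j * S^3) with hGdef
    have hid : Y^2 - (2*Bm)^2 = Polynomial.X ^ n * G := by
      calc Y^2 - (2*Bm)^2
          = 4*(Am^3 - Bm^2) - 3*(T^2*((Polynomial.X ^ j * S)^2))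
            - 4*((Polynomial.X ^ j * S)^3) := by rw [hAmT, hYdef]; ring
        _ = 4*(Polynomial.X ^ n*Dm) - 3*(T^2*((Polynomial.X ^ j * S)^2))
            - 4*((Polynomial.X ^ j * S)^3) := by rw [hfm]
        _ = Polynomial.X ^ n * G := by rw [hGdef, hj]; ring
    have hsum0 : (Y + 2*Bm).coeff 0 = 4 * hk^3 := by
      rw [Polynomial.coeff_add, hYdef, Polynomial.coeff_add, Polynomial.mul_coeff_zero,
        Polynomial.mul_coeff_zero, Polynomial.mul_coeff_zero, coeff0_pow,
        coeff0_Xpow_mul hj1, Polynomial.mul_coeff_zero, hco2, hco3, hT0, hBm0]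
      ring
    have hsum0' : (Y + 2*Bm).coeff 0 ≠ 0 := by rw [hsum0]; exact h4k
    obtain ⟨E, hE, hEG⟩ := punch hid hsum0'
    have hEIP : IP p E := IP.shift hp hE
      (IP.sub hp hYIP (IP.mul hp ip2 (IP.map hp B)))
    have hG0 : G.coeff 0 = 4*(φ (D.coeff 0)) - 3*(hk^2*(S.coeff 0)^2) := by
      have hx1 : ((3:Polynomial KK)*(T^2*S^2)).coeff 0 = 3*(hk^2*(S.coeff 0)^2) := by
        rw [Polynomial.mul_coeff_zero, Polynomial.mul_coeff_zero, coeff0_pow, coeff0_pow,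
          hco3, hT0]
      have hx2 : ((4:Polynomial KK)*(Polynomial.X ^ j * S^3)).coeff 0 = 0 := by
        rw [Polynomial.mul_coeff_zero, coeff0_Xpow_mul hj1, mul_zero]
      have hx3 : ((4:Polynomial KK)*Dm).coeff 0 = 4*(φ (D.coeff 0)) := by
        rw [Polynomial.mul_coeff_zero, hco4, hDmdef, Polynomial.coeff_map]
      rw [hGdef, Polynomial.coeff_sub, Polynomial.coeff_sub, hx1, hx2, hx3]
      ring
    have hE0 : E.coeff 0 * (4*hk^3) = 4*(φ (D.coeff 0)) - 3*(hk^2*(S.coeff 0)^2) := by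
      have h1 := congrArg (fun P => Polynomial.coeff P 0) hEG
      simpa [Polynomial.mul_coeff_zero, hsum0, hG0] using h1
    have hfin : φ ((4:R2) * D.coeff 0)
        = E.coeff 0 * (4*hk^3) + 3*(hk^2*(S.coeff 0)^2) := by
      rw [map_mul, ← e4]
      linear_combination -hE0
    have hv1 : Vl p 2 (E.coeff 0 * (4*hk^3)) := by
      have hk3 : Vl p 3 (hk^3) := by
        rw [hhk, ← map_pow]
        exact Vl.of_dvd hp ⟨pt^3, by rw [hH]; ring⟩
      have h1 : Vl p 3 (E.coeff 0 * (4*hk^3)) := by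
        have h2 := Vl.mul hp (hEIP 0) (Vl.mul hp h4v hk3)
        simpa using h2
      exact Vl.mono (by omega) h1
    have hv2 : Vl p 2 (3*(hk^2*(S.coeff 0)^2)) := by
      have hk2 : Vl p 2 (hk^2) := by
        rw [hhk, ← map_pow]
        exact Vl.of_dvd hp ⟨pt^2, by rw [hH]; ring⟩
      have hS2 : Vl p 0 ((S.coeff 0)^2) := by
        have := Vl.mul hp (hSip 0) (hSip 0)
        simpa [pow_two] using this
      have h2 := Vl.mul hp h3v (Vl.mul hp hk2 hS2)
      simpa using h2
    have hv : Vl p 2 (φ ((4:R2) * D.coeff 0)) := by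
      rw [hfin]; exact Vl.add hp hv1 hv2
    have hdvd : p^2 ∣ (4:R2) * D.coeff 0 := Vl.extract hp hv
    exact hp.pow_dvd_of_dvd_mul_left 2 hnd4 hdvd
  · -- n = 2*j + 1
    obtain ⟨T, S, hTIP, hT0, hTS⟩ := build (j+1) (by omega) (by omega)
    have hAmT : Am = T^2 + Polynomial.X ^ (j+1) * S := by rw [← hTS]; ring
    have hSip : IP p S :=
      IP.shift hp hTS (IP.sub hp (IP.map hp A) (IP.pow hp hTIP 2))
    set Y : Polynomial KK := 2*T^3 + 3*(T*(Polynomial.X ^ (j+1) * S)) with hYdef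
    have hYIP : IP p Y := by
      apply IP.add hp (IP.mul hp ip2 (IP.pow hp hTIP 3))
      exact IP.mul hp ip3 (IP.mul hp hTIP (IP.mul hp (IP.pow hp (IP.Xp hp) (j+1)) hSip))
    set G : Polynomial KK :=
      4*Dm - 3*(Polynomial.X*(T^2*S^2)) - 4*(Polynomial.X ^ (j+2) * S^3) with hGdef
    have hid : Y^2 - (2*Bm)^2 = Polynomial.X ^ n * G := by
      calc Y^2 - (2*Bm)^2
          = 4*(Am^3 - Bm^2) - 3*(T^2*((Polynomial.X ^ (j+1) * S)^2))
            - 4*((Polynomial.X ^ (j+1) * S)^3) := by rw [hAmT, hYdef]; ring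
        _ = 4*(Polynomial.X ^ n*Dm) - 3*(T^2*((Polynomial.X ^ (j+1) * S)^2))
            - 4*((Polynomial.X ^ (j+1) * S)^3) := by rw [hfm]
        _ = Polynomial.X ^ n * G := by rw [hGdef, hj]; ring
    have hsum0 : (Y + 2*Bm).coeff 0 = 4 * hk^3 := by
      rw [Polynomial.coeff_add, hYdef, Polynomial.coeff_add, Polynomial.mul_coeff_zero,
        Polynomial.mul_coeff_zero, Polynomial.mul_coeff_zero, coeff0_pow,
        coeff0_Xpow_mul (by omega : 1 ≤ j+1), Polynomial.mul_coeff_zero, hco2, hco3, hT0, hBm0]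
      ring
    have hsum0' : (Y + 2*Bm).coeff 0 ≠ 0 := by rw [hsum0]; exact h4k
    obtain ⟨E, hE, hEG⟩ := punch hid hsum0'
    have hEIP : IP p E := IP.shift hp hE
      (IP.sub hp hYIP (IP.mul hp ip2 (IP.map hp B)))
    have hG0 : G.coeff 0 = 4*(φ (D.coeff 0)) := by
      have hx1 : ((3:Polynomial KK)*(Polynomial.X*(T^2*S^2))).coeff 0 = 0 := by
        rw [Polynomial.mul_coeff_zero, Polynomial.mul_coeff_zero, Polynomial.coeff_X_zero,
          zero_mul, mul_zero]
      have hx2 : ((4:Polynomial KK)*(Polynomial.X ^ (j+2) * S^3)).coeff 0 = 0 := by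
        rw [Polynomial.mul_coeff_zero, coeff0_Xpow_mul (by omega : 1 ≤ j+2), mul_zero]
      have hx3 : ((4:Polynomial KK)*Dm).coeff 0 = 4*(φ (D.coeff 0)) := by
        rw [Polynomial.mul_coeff_zero, hco4, hDmdef, Polynomial.coeff_map]
      rw [hGdef, Polynomial.coeff_sub, Polynomial.coeff_sub, hx1, hx2, hx3]
      ring
    have hE0 : E.coeff 0 * (4*hk^3) = 4*(φ (D.coeff 0)) := by
      have h1 := congrArg (fun P => Polynomial.coeff P 0) hEG
      simpa [Polynomial.mul_coeff_zero, hsum0, hG0] using h1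
    have hfin : φ ((4:R2) * D.coeff 0) = E.coeff 0 * (4*hk^3) := by
      rw [map_mul, ← e4]
      linear_combination -hE0
    have hv1 : Vl p 2 (E.coeff 0 * (4*hk^3)) := by
      have hk3 : Vl p 3 (hk^3) := by
        rw [hhk, ← map_pow]
        exact Vl.of_dvd hp ⟨pt^3, by rw [hH]; ring⟩
      have h1 : Vl p 3 (E.coeff 0 * (4*hk^3)) := by
        have h2 := Vl.mul hp (hEIP 0) (Vl.mul hp h4v hk3)
        simpa using h2
      exact Vl.mono (by omega) h1
    have hv : Vl p 2 (φ ((4:R2) * D.coeff 0)) := by rw [hfin]; exact hv1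
    have hdvd : p^2 ∣ (4:R2) * D.coeff 0 := Vl.extract hp hv
    exact hp.pow_dvd_of_dvd_mul_left 2 hnd4 hdvd

lemma sqfree_sq_dvd {h x : R2} (hsq : Squarefree h)
    (hdvd : ∀ q : R2, Prime q → q ∣ h → q ^ 2 ∣ x) : h ^ 2 ∣ x := by
  induction h using UniqueFactorizationMonoid.induction_on_prime generalizing x with
  | h₁ => exact absurd hsq not_squarefree_zero
  | h₂ u hu => exact (hu.pow 2).dvd
  | h₃ a q ha hq ih =>
      have hsa : Squarefree a := hsq.of_mul_right
      have hqa : ¬ q ∣ a := by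
        intro hd
        exact hq.not_unit (hsq q (mul_dvd_mul_left q hd))
      have ha2 : a ^ 2 ∣ x :=
        ih hsa fun r hr hra => hdvd r hr (hra.trans (dvd_mul_left a q))
      have hq2 : q ^ 2 ∣ x := hdvd q hq (dvd_mul_right q a)
      obtain ⟨y, hy⟩ := ha2
      have hqy : q ^ 2 ∣ y := by
        have hqa2 : ¬ q ∣ a ^ 2 := fun hd => hqa (hq.dvd_of_dvd_pow hd)
        exact hq.pow_dvd_of_dvd_mul_left 2 hqa2 (by rw [← hy]; exact hq2)
      obtain ⟨z, hz⟩ := hqy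
      exact ⟨z, by rw [hy, hz]; ring⟩

/-- Let `h ∈ ℂ[s,t]` be nonzero and squarefree, `f̌, ǧ ∈ ℂ[s,t][e]`, and `l, m ≥ 1`.
Set `f = -3h² + eˡ·f̌`, `g = 2h³ + eᵐ·ǧ`, `Δ = 4f³ + 27g² ≠ 0`, and let `n` be the
largest integer with `eⁿ ∣ Δ`, with `Δ = eⁿ·Δ'`. Then `n ≥ 1` and `h²` divides the
polynomial obtained from `Δ'` by setting `e = 0` (i.e. its constant coefficient). -/
theorem stmt_1 (h : MvPolynomial (Fin 2) ℂ) (hh0 : h ≠ 0) (hsq : Squarefree h)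
    (fc gc : Polynomial (MvPolynomial (Fin 2) ℂ)) (l m : ℕ) (hl : 0 < l) (hm : 0 < m)
    (f g Δ : Polynomial (MvPolynomial (Fin 2) ℂ))
    (hf : f = Polynomial.C (-3 * h ^ 2) + Polynomial.X ^ l * fc)
    (hg : g = Polynomial.C (2 * h ^ 3) + Polynomial.X ^ m * gc)
    (hΔ : Δ = 4 * f ^ 3 + 27 * g ^ 2)
    (hΔ0 : Δ ≠ 0)
    (n : ℕ) (Δ' : Polynomial (MvPolynomial (Fin 2) ℂ))
    (hfac : Δ = Polynomial.X ^ n * Δ')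
    (hmax : ¬ (Polynomial.X ^ (n + 1) ∣ Δ)) :
    1 ≤ n ∧ h ^ 2 ∣ Δ'.coeff 0 := by
  have hC3 : Polynomial.C (-3 * h ^ 2) = -(3*(Polynomial.C h)^2) := by
    rw [map_mul, map_pow, map_neg, map_ofNat]; ring
  have hC2h3 : Polynomial.C (2 * h ^ 3) = 2*(Polynomial.C h)^3 := by
    rw [map_mul, map_pow, map_ofNat]
  -- coefficient 0 of Δ vanishes
  have hU0 : (Polynomial.X ^ l * fc).coeff 0 = 0 := coeff0_Xpow_mul hl
  have hW0 : (Polynomial.X ^ m * gc).coeff 0 = 0 := coeff0_Xpow_mul hm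
  have hf0 : f.coeff 0 = -3 * h ^ 2 := by
    rw [hf, Polynomial.coeff_add, hU0, Polynomial.coeff_C_zero, add_zero]
  have hg0 : g.coeff 0 = 2 * h ^ 3 := by
    rw [hg, Polynomial.coeff_add, hW0, Polynomial.coeff_C_zero, add_zero]
  have hco4 : ((4 : Polynomial R2)).coeff 0 = 4 := by norm_num
  have hco27 : ((27 : Polynomial R2)).coeff 0 = 27 := by norm_num
  have hΔc0 : Δ.coeff 0 = 0 := by
    rw [hΔ, Polynomial.coeff_add, Polynomial.mul_coeff_zero, Polynomial.mul_coeff_zero,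
      coeff0_pow, coeff0_pow, hco4, hco27, hf0, hg0]
    ring
  have hn1 : 1 ≤ n := by
    rcases Nat.eq_zero_or_pos n with h0 | h1
    · exfalso
      apply hmax
      rw [h0, zero_add, pow_one]
      exact Polynomial.X_dvd_iff.mpr hΔc0
    · exact h1
  refine ⟨hn1, ?_⟩
  -- split W
  set W : Polynomial R2 := Polynomial.X ^ m * gc with hWdef
  have hmon : ((Polynomial.X : Polynomial R2) ^ n).Monic := Polynomial.monic_X_pow n
  set W2 := W /ₘ (Polynomial.X ^ n) with hW2def
  set W1 := W %ₘ (Polynomial.X ^ n) with hW1def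
  have hWsplit : W1 + Polynomial.X ^ n * W2 = W := Polynomial.modByMonic_add_div W _
  have hW10 : W1.coeff 0 = 0 := by
    have hcalc : W1 = W - Polynomial.X ^ n * W2 := by rw [← hWsplit]; ring
    rw [hcalc, Polynomial.coeff_sub, coeff0_Xpow_mul hm, coeff0_Xpow_mul hn1, sub_zero]
  -- the scaled pair
  set Ab : Polynomial R2 := Polynomial.C (36*h^2) - 12*(Polynomial.X ^ l * fc) with hAbdef
  set Bb : Polynomial R2 := Polynomial.C (216*h^3) + 108*W1 with hBbdef
  set Db : Polynomial R2 :=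
    -432*Δ' + 11664*(W2 * (Polynomial.C (4*h^3) + Polynomial.X ^ n * W2 + 2*W1)) with hDbdef
  have hCA : Polynomial.C (36*h^2 : R2) = 36*(Polynomial.C h)^2 := by
    rw [map_mul, map_pow, map_ofNat]
  have hCB : Polynomial.C (216*h^3 : R2) = 216*(Polynomial.C h)^3 := by
    rw [map_mul, map_pow, map_ofNat]
  have hCD : Polynomial.C (4*h^3 : R2) = 4*(Polynomial.C h)^3 := by
    rw [map_mul, map_pow, map_ofNat]
  have hABD : Ab^3 - Bb^2 = Polynomial.X ^ n * Db := by
    have hgW : g = Polynomial.C (2*h^3) + (W1 + Polynomial.X ^ n * W2) := by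
      rw [hg, hWsplit]
    have hid0 : Ab^3 - Bb^2 = -432*Δ
        + 11664*((Polynomial.X ^ n * W2)
          * (Polynomial.C (4*h^3) + Polynomial.X ^ n * W2 + 2*W1)) := by
      rw [hAbdef, hBbdef, hΔ, hf, hgW, hCA, hCB, hCD, hC3, hC2h3]
      ring
    rw [hid0, hfac, hDbdef]
    ring
  have hAb0 : Ab.coeff 0 = (6*h)^2 := by
    rw [hAbdef, Polynomial.coeff_sub, Polynomial.coeff_C_zero, Polynomial.mul_coeff_zero,
      hU0, mul_zero, sub_zero]
    ring
  have hBb0 : Bb.coeff 0 = (6*h)^3 := by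
    rw [hBbdef, Polynomial.coeff_add, Polynomial.coeff_C_zero, Polynomial.mul_coeff_zero,
      hW10, mul_zero, add_zero]
    ring
  have hu6 : IsUnit (6 : R2) := by
    apply IsUnit.of_mul_eq_one (MvPolynomial.C ((6:ℂ)⁻¹))
    rw [show (6 : R2) = MvPolynomial.C (6:ℂ) from (map_ofNat MvPolynomial.C 6).symm, ← map_mul]
    norm_num
  -- key lemma at every prime of h
  have hmain : h ^ 2 ∣ Db.coeff 0 := by
    apply sqfree_sq_dvd hsq
    intro q hq hqh
    obtain ⟨ht, hht⟩ := hqh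
    have hqht : ¬ q ∣ ht := by
      intro hd
      exact hq.not_unit (hsq q (by rw [hht]; exact mul_dvd_mul_left q hd))
    have h6ne : ¬ q ∣ (6*ht : R2) := by
      intro hd
      rcases hq.dvd_mul.mp hd with h1 | h1
      · exact hq.not_unit (isUnit_of_dvd_unit h1 hu6)
      · exact hqht h1
    exact key hq (by rw [hht]; ring) h6ne
      (mul_ne_zero (fun h6 => hq.not_unit (by rw [show (6:R2) = 0 from h6] at hu6; simpa using hu6)) hh0)
      Ab Bb Db hAb0 hBb0 n hn1 hABD
  -- extract the conclusion
  have hDb0 : Db.coeff 0 = -432*(Δ'.coeff 0) + 46656*(h^3*(W2.coeff 0)) := by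
    have hx1 : ((-432 : Polynomial R2)*Δ').coeff 0 = -432*(Δ'.coeff 0) := by
      rw [Polynomial.mul_coeff_zero]
      norm_num
    have hx2 : ((Polynomial.C (4*h^3) + Polynomial.X ^ n * W2 + 2*W1)).coeff 0 = 4*h^3 := by
      rw [Polynomial.coeff_add, Polynomial.coeff_add, Polynomial.coeff_C_zero,
        coeff0_Xpow_mul hn1, Polynomial.mul_coeff_zero, hW10, mul_zero, add_zero, add_zero]
    have hx3 : ((11664 : Polynomial R2)*(W2 * (Polynomial.C (4*h^3) + Polynomial.X ^ n * W2
        + 2*W1))).coeff 0 = 46656*(h^3*(W2.coeff 0)) := by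
      rw [Polynomial.mul_coeff_zero, Polynomial.mul_coeff_zero, hx2]
      norm_num
      ring
    rw [hDbdef, Polynomial.coeff_add, hx1, hx3]
  have hdvd432 : h ^ 2 ∣ (-432 : R2)*(Δ'.coeff 0) := by
    have h2 : h ^ 2 ∣ 46656*(h^3*(W2.coeff 0)) := by
      exact Dvd.dvd.mul_left (by exact Dvd.dvd.mul_right (pow_dvd_pow h (by omega)) _) _
    have h3 : (-432 : R2)*(Δ'.coeff 0) = Db.coeff 0 - 46656*(h^3*(W2.coeff 0)) := by
      rw [hDb0]; ring
    rw [h3]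
    exact dvd_sub hmain h2
  have hu432 : IsUnit (-432 : R2) := by
    apply IsUnit.of_mul_eq_one (MvPolynomial.C (-(432:ℂ)⁻¹))
    rw [show (-432 : R2) = MvPolynomial.C (-432:ℂ) from by
      rw [map_neg, map_ofNat], ← map_mul]
    norm_num
  obtain ⟨v, hv⟩ := hu432.exists_left_inv
  calc h ^ 2 ∣ (-432 : R2)*(Δ'.coeff 0) := hdvd432
  _ = Δ'.coeff 0 * (-432) := by ring
  _ ∣ Δ'.coeff 0 := ⟨v, by rw [mul_assoc, mul_comm (-432:R2) v, hv, mul_one]⟩
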